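/- For α, α' ∈ ℂ, the algebras A₀₂^α (with products e₁·e₂ = (1+α)e₃, e₂·e₁ = (1−α)e₃) and A₀₂^{α'} are isomorphic if and only if α'² = α². -/

import Mathlib

/-- The algebra A₀₂^α : e₁e₂ = (1+α)e₃, e₂e₁ = (1−α)e₃. -/
def mulA02 (α : ℂ) (x y : Fin 3 → ℂ) : Fin 3 → ℂ :=
  ![0, 0, (1 + α) * (x 0 * y 1) + (1 - α) * (x 1 * y 0)]

/-- Swap of the first two coordinates, as a linear equivalence. -/
noncomputable def swapLE : (Fin 3 → ℂ) ≃ₗ[ℂ] (Fin 3 → ℂ) where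
  toFun x := ![x 1, x 0, x 2]
  invFun x := ![x 1, x 0, x 2]
  map_add' x y := by funext i; fin_cases i <;> simp
  map_smul' c x := by funext i; fin_cases i <;> simp
  left_inv x := by funext i; fin_cases i <;> simp
  right_inv x := by funext i; fin_cases i <;> simp

theorem stmt_15 (α α' : ℂ) :
    (∃ φ : (Fin 3 → ℂ) ≃ₗ[ℂ] (Fin 3 → ℂ),
      ∀ x y : Fin 3 → ℂ, φ (mulA02 α x y) = mulA02 α' (φ x) (φ y)) ↔
    α' ^ 2 = α ^ 2 := by
  constructor
  · rintro ⟨φ, hφ⟩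
    set e1 : Fin 3 → ℂ := ![1, 0, 0] with he1
    set e2 : Fin 3 → ℂ := ![0, 1, 0] with he2
    set e3 : Fin 3 → ℂ := ![0, 0, 1] with he3
    have hsm : ∀ c : ℂ, (![0, 0, c] : Fin 3 → ℂ) = c • e3 := by
      intro c; funext i; fin_cases i <;> simp [he3]
    have h12 : mulA02 α e1 e2 = (1 + α) • e3 := by
      rw [← hsm]; simp [mulA02, he1, he2]
    have h21 : mulA02 α e2 e1 = (1 - α) • e3 := by
      rw [← hsm]; simp [mulA02, he1, he2]
    set A := φ e1 with hA
    set B := φ e2 with hB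
    set C := φ e3 with hC
    -- component equations
    have E1 : ∀ i, (1 + α) * C i = mulA02 α' A B i := by
      intro i
      have := congrFun (hφ e1 e2) i
      rwa [h12, map_smul, Pi.smul_apply, smul_eq_mul] at this
    have E2 : ∀ i, (1 - α) * C i = mulA02 α' B A i := by
      intro i
      have := congrFun (hφ e2 e1) i
      rwa [h21, map_smul, Pi.smul_apply, smul_eq_mul] at this
    have hC0 : C 0 = 0 := by
      have t1 := E1 0; have t2 := E2 0
      simp only [mulA02, Matrix.cons_val_zero] at t1 t2
      linear_combination t1 / 2 + t2 / 2
    have hC1 : C 1 = 0 := by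
      have t1 := E1 1; have t2 := E2 1
      simp only [mulA02, Matrix.cons_val_one, Matrix.head_cons, Matrix.cons_val_zero] at t1 t2
      linear_combination t1 / 2 + t2 / 2
    have hC2 : C 2 ≠ 0 := by
      intro h
      have hCz : C = 0 := by
        funext i; fin_cases i <;> simp_all
      have : e3 = 0 := by
        have := (LinearEquiv.map_eq_zero_iff φ).mp (hC ▸ hCz)
        exact this
      have := congrFun this 2
      simp [he3] at this
    -- products of basis among themselves
    have hAA : A 0 * A 1 = 0 := by
      have := congrFun (hφ e1 e1) 2
      have hz : mulA02 α e1 e1 = (0 : Fin 3 → ℂ) := by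
        funext i; fin_cases i <;> simp [mulA02, he1]
      rw [hz, map_zero] at this
      simp [mulA02] at this
      linear_combination -this / 2
    -- main equations at component 2
    have e12 : (1 + α) * C 2 = (1 + α') * (A 0 * B 1) + (1 - α') * (A 1 * B 0) := by
      have := E1 2; simpa [mulA02] using this
    have e21 : (1 - α) * C 2 = (1 + α') * (B 0 * A 1) + (1 - α') * (B 1 * A 0) := by
      have := E2 2; simpa [mulA02] using this
    -- need B 0 * B 1 = 0
    have hBB : B 0 * B 1 = 0 := by
      have := congrFun (hφ e2 e2) 2
      have hz : mulA02 α e2 e2 = (0 : Fin 3 → ℂ) := by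
        funext i; fin_cases i <;> simp [mulA02, he2]
      rw [hz, map_zero] at this
      simp [mulA02] at this
      linear_combination -this / 2
    set p := A 0 * B 1 with hp
    set q := A 1 * B 0 with hq
    have hpq : p * q = 0 := by
      have : p * q = (A 0 * A 1) * (B 0 * B 1) := by ring
      rw [this, hAA, zero_mul]
    have hsum : C 2 = p + q := by linear_combination e12 / 2 + e21 / 2
    have hdiff : α * C 2 = α' * (p - q) := by linear_combination e12 / 2 - e21 / 2
    have key : (α' ^ 2 - α ^ 2) * (C 2 * C 2) = 0 := by
      linear_combination (-(α * C 2) - α' * (p - q)) * hdiff +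
        α' ^ 2 * (C 2 + p + q) * hsum + 4 * α' ^ 2 * hpq
    have := mul_eq_zero.mp key
    rcases this with h | h
    · exact sub_eq_zero.mp h
    · exact absurd (mul_self_eq_zero.mp h) hC2
  · intro h
    have h' : (α' - α) * (α' + α) = 0 := by linear_combination h
    rcases mul_eq_zero.mp h' with h0 | h0
    · have : α' = α := by linear_combination h0
      subst this
      exact ⟨LinearEquiv.refl ℂ _, fun x y => rfl⟩
    · have hneg : α' = -α := by linear_combination h0
      subst hneg
      refine ⟨swapLE, fun x y => ?_⟩
      funext i
      fin_cases i <;> simp [swapLE, mulA02] <;> ring
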